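/- Let h₀ > 0 and κ₀ > 0 be real constants. Define r : ℝ → ℝ by r(t) = exp(−1/t) for t > 0 and r(t) = 0 for t ≤ 0, and define ρ : ℝ → ℝ by ρ(t) = exp((1/h₀) · ∫₀ᵗ r(τ) dτ). Then there exists t₀ > 0 such that for every t with 0 < t < t₀ and all real numbers R, K, H satisfying R ≥ 0, |K| ≤ κ₀, and H ≥ h₀, one has (1/ρ(t)²) · ( R + 2K·(ρ(t)² − 1) + (2ρ'(t)/ρ(t))·H ) ≥ (r(t)/ρ(t)²) · ( 2 − (8κ₀/h₀)·t ), and this lower bound is strictly positive. -/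

import Mathlib

open Real Set

set_option maxHeartbeats 1000000 in
theorem stmt_4 (h₀ κ₀ : ℝ) (hh₀ : 0 < h₀) (hκ₀ : 0 < κ₀)
    (r : ℝ → ℝ) (hr : ∀ t : ℝ, r t = if 0 < t then Real.exp (-(1 / t)) else 0)
    (ρ : ℝ → ℝ)
    (hρ : ∀ t : ℝ, ρ t = Real.exp ((1 / h₀) * ∫ τ in (0:ℝ)..t, r τ)) :
    ∃ t₀ : ℝ, 0 < t₀ ∧ ∀ t : ℝ, 0 < t → t < t₀ →
      ∀ R K H : ℝ, 0 ≤ R → |K| ≤ κ₀ → h₀ ≤ H →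
        (r t / (ρ t) ^ 2) * (2 - (8 * κ₀ / h₀) * t) ≤
          (1 / (ρ t) ^ 2) *
            (R + 2 * K * ((ρ t) ^ 2 - 1) + (2 * deriv ρ t / ρ t) * H) ∧
        0 < (r t / (ρ t) ^ 2) * (2 - (8 * κ₀ / h₀) * t) := by
  -- basic properties of r
  have hr_nonneg : ∀ t, 0 ≤ r t := by
    intro t; rw [hr t]; split
    · exact (Real.exp_pos _).le
    · exact le_refl 0
  have hr_le_one : ∀ t, r t ≤ 1 := by
    intro t; rw [hr t]; split
    · rename_i htp
      apply Real.exp_le_one_iff.mpr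
      have : 0 < 1 / t := one_div_pos.mpr htp
      linarith
    · norm_num
  have hr_meas : Measurable r := by
    have : r = fun t => if 0 < t then Real.exp (-(1 / t)) else 0 := funext hr
    rw [this]
    exact Measurable.ite measurableSet_Ioi
      (Real.measurable_exp.comp ((measurable_const.div measurable_id).neg)) measurable_const
  have hInt : ∀ x : ℝ, IntervalIntegrable r MeasureTheory.volume 0 x := by
    intro x
    rw [intervalIntegrable_iff]
    apply MeasureTheory.Measure.integrableOn_of_bounded
    · exact measure_Ioc_lt_top.ne
    · exact hr_meas.aestronglyMeasurable
    · filter_upwards with y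
      rw [Real.norm_eq_abs, abs_le]
      exact ⟨by linarith [hr_nonneg y], hr_le_one y⟩
  -- monotonicity on [0,t]
  have hr_mono : ∀ t τ : ℝ, 0 < t → τ ≤ t → r τ ≤ r t := by
    intro t τ ht hτt
    rw [hr τ, hr t, if_pos ht]
    split
    · rename_i hτ
      apply Real.exp_le_exp.mpr
      have : 1 / t ≤ 1 / τ := one_div_le_one_div_of_le hτ hτt
      linarith
    · exact (Real.exp_pos _).le
  -- derivative of ρ
  have hρpos : ∀ t, 0 < ρ t := fun t => (hρ t) ▸ Real.exp_pos _
  have hderiv : ∀ t : ℝ, 0 < t → deriv ρ t = ρ t * ((1 / h₀) * r t) := by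
    intro t ht
    have hcont : ContinuousAt r t := by
      have hev : ∀ᶠ s in nhds t, r s = Real.exp (-(1 / s)) := by
        filter_upwards [eventually_gt_nhds ht] with s hs
        rw [hr s, if_pos hs]
      have : ContinuousAt (fun s => Real.exp (-(1 / s))) t :=
        (Real.continuous_exp.continuousAt).comp
          (((continuousAt_const.div continuousAt_id (ne_of_gt ht))).neg)
      exact ContinuousAt.congr this (Filter.EventuallyEq.symm hev)
    have hFTC : HasDerivAt (fun u => ∫ τ in (0:ℝ)..u, r τ) (r t) t :=
      intervalIntegral.integral_hasDerivAt_right (hInt t)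
        (hr_meas.stronglyMeasurable.stronglyMeasurableAtFilter) hcont
    have hg : HasDerivAt (fun u => (1 / h₀) * ∫ τ in (0:ℝ)..u, r τ) ((1 / h₀) * r t) t :=
      hFTC.const_mul _
    have hρ' : HasDerivAt ρ (Real.exp ((1 / h₀) * ∫ τ in (0:ℝ)..t, r τ) * ((1 / h₀) * r t)) t := by
      have := hg.exp
      have heq : ρ = fun u => Real.exp ((1 / h₀) * ∫ τ in (0:ℝ)..u, r τ) := funext hρ
      rw [heq]; exact this
    rw [hρ'.deriv, hρ t]
  -- choose t₀
  refine ⟨min (h₀ / 4) (h₀ / (8 * κ₀)), lt_min (by positivity) (by positivity), ?_⟩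
  intro t ht ht₀ R K H hR hK hH
  have ht1 : t < h₀ / 4 := lt_of_lt_of_le ht₀ (min_le_left _ _)
  have ht2 : t < h₀ / (8 * κ₀) := lt_of_lt_of_le ht₀ (min_le_right _ _)
  have hrt_pos : 0 < r t := by rw [hr t, if_pos ht]; exact Real.exp_pos _
  have hrt_le : r t ≤ 1 := hr_le_one t
  -- integral bounds
  set I := ∫ τ in (0:ℝ)..t, r τ with hI
  have hI_nonneg : 0 ≤ I :=
    intervalIntegral.integral_nonneg ht.le (fun x _ => hr_nonneg x)
  have hI_le : I ≤ t * r t := by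
    have h1 : (∫ τ in (0:ℝ)..t, r τ) ≤ ∫ _τ in (0:ℝ)..t, r t := by
      apply intervalIntegral.integral_mono_on ht.le (hInt t) intervalIntegrable_const
      intro x hx
      exact hr_mono t x ht hx.2
    have h2 : (∫ _τ in (0:ℝ)..t, r t) = t * r t := by
      rw [intervalIntegral.integral_const, sub_zero, smul_eq_mul, mul_comm]
    linarith [h1, h2 ▸ h1]
  -- ρ t ^ 2 = exp ((2/h₀) * I)
  have hρsq : (ρ t) ^ 2 = Real.exp ((2 / h₀) * I) := by
    rw [hρ t, ← Real.exp_nat_mul]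
    norm_num; ring_nf
    rfl
  set x := (2 / h₀) * I with hx
  have hx_nonneg : 0 ≤ x := by positivity
  have hx_le : x ≤ 1 / 2 := by
    have : I ≤ t := le_trans hI_le (by nlinarith)
    rw [hx]
    rw [div_mul_eq_mul_div, div_le_iff₀ hh₀]
    nlinarith
  -- exp x - 1 ≤ 2 x for 0 ≤ x ≤ 1/2
  have hexp_half : Real.exp (1/2 : ℝ) ≤ 2 := by
    have h1 : Real.exp (1/2 : ℝ) ^ 2 = Real.exp 1 := by
      rw [← Real.exp_nat_mul]; norm_num
    nlinarith [Real.exp_one_lt_d9, Real.exp_pos (1/2 : ℝ)]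
  have hexp_bound : Real.exp x - 1 ≤ 2 * x := by
    have h1 : Real.exp (-x) ≥ 1 - x := by linarith [Real.add_one_le_exp (-x)]
    have h2 : Real.exp x - 1 ≤ x * Real.exp x := by
      have := mul_le_mul_of_nonneg_left h1 (Real.exp_pos x).le
      rw [← Real.exp_add] at this
      simp at this
      nlinarith [Real.exp_pos x]
    have h3 : Real.exp x ≤ 2 := le_trans (Real.exp_le_exp.mpr (by linarith)) hexp_half
    nlinarith
  have hρsq_sub : (ρ t) ^ 2 - 1 ≤ (4 / h₀) * (t * r t) := by
    rw [hρsq]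
    have h5 : (4 / h₀) * I ≤ (4 / h₀) * (t * r t) :=
      mul_le_mul_of_nonneg_left hI_le (by positivity)
    have h6 : 2 * x = (4 / h₀) * I := by rw [hx]; ring
    linarith
  have hρsq_ge : (1:ℝ) ≤ (ρ t) ^ 2 := by
    rw [hρsq]
    exact Real.one_le_exp (by positivity)
  -- the key term
  have hdρ := hderiv t ht
  have hterm : (2 * deriv ρ t / ρ t) * H = (2 / h₀) * r t * H := by
    rw [hdρ]
    have hρne : ρ t ≠ 0 := (hρpos t).ne'
    field_simp
  have hKbound : -κ₀ ≤ K := (abs_le.mp hK).1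
  have hbracket : r t * (2 - (8 * κ₀ / h₀) * t) ≤
      R + 2 * K * ((ρ t) ^ 2 - 1) + (2 * deriv ρ t / ρ t) * H := by
    rw [hterm]
    have h1 : 2 * r t ≤ (2 / h₀) * r t * H := by
      have ha : (0:ℝ) ≤ (2 / h₀) * r t := mul_nonneg (by positivity) (hr_nonneg t)
      have h' : (2 / h₀) * r t * h₀ ≤ (2 / h₀) * r t * H :=
        mul_le_mul_of_nonneg_left hH ha
      have heq : (2 / h₀) * r t * h₀ = 2 * r t := by field_simp
      linarith
    have h2 : -(2 * κ₀) * ((ρ t) ^ 2 - 1) ≤ 2 * K * ((ρ t) ^ 2 - 1) := by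
      nlinarith [hρsq_ge, hKbound]
    have h3 : (2 * κ₀) * ((ρ t) ^ 2 - 1) ≤ (8 * κ₀ / h₀) * (t * r t) := by
      have h' := mul_le_mul_of_nonneg_left hρsq_sub (by positivity : (0:ℝ) ≤ 2 * κ₀)
      have e : (2 * κ₀) * ((4 / h₀) * (t * r t)) = (8 * κ₀ / h₀) * (t * r t) := by
        ring
      linarith
    have hL : r t * (2 - (8 * κ₀ / h₀) * t) = 2 * r t - (8 * κ₀ / h₀) * (t * r t) := by
      ring
    rw [hL]
    linarith
  constructor
  · have hρ2 : (0:ℝ) < (ρ t) ^ 2 := by positivity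
    have key := mul_le_mul_of_nonneg_left hbracket (le_of_lt (one_div_pos.mpr hρ2))
    have heq : (r t / (ρ t) ^ 2) * (2 - (8 * κ₀ / h₀) * t)
        = (1 / (ρ t) ^ 2) * (r t * (2 - (8 * κ₀ / h₀) * t)) := by ring
    rw [heq]
    exact key
  · have hfac : 0 < 2 - (8 * κ₀ / h₀) * t := by
      have : (8 * κ₀ / h₀) * t < 1 := by
        rw [div_mul_eq_mul_div, div_lt_one hh₀]
        have h' : t * (8 * κ₀) < h₀ := (lt_div_iff₀ (by positivity : (0:ℝ) < 8 * κ₀)).mp ht2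
        linarith
      linarith
    have : 0 < r t / (ρ t) ^ 2 := div_pos hrt_pos (by positivity)
    exact mul_pos this hfac
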